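/- For every δ ∈ ℝ there exist a constant C > 0 and an integer N₀ such that for all N ≥ N₀: (i) ‖S₀B(δ)‖_max ≤ C/N²; (ii) ‖B(δ)S₀E‖_max ≤ C/N²; and (iii) ‖P₀⊥E‖_max ≤ C/N. -/

import Mathlib

open Filter Matrix

/-- Hankelization (diagonal averaging): the `j`-th value is the average of the
entries `Y i k` with `i + k = j`. -/
noncomputable def hankelize {L K : ℕ} (Y : Matrix (Fin L) (Fin K) ℝ) (j : ℕ) : ℝ :=
  (∑ i : Fin L, ∑ k : Fin K, if (i : ℕ) + (k : ℕ) = j then Y i k else 0) /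
  (∑ i : Fin L, ∑ k : Fin K, if (i : ℕ) + (k : ℕ) = j then (1 : ℝ) else 0)

/-- Squared Euclidean norm of a vector. -/
noncomputable def normSq {M : ℕ} (w : Fin M → ℝ) : ℝ := ∑ i, w i ^ 2

/-- `u` is a unit eigenvector of `A` corresponding to its largest eigenvalue. -/
def IsTopEigenvector {L : ℕ} (A : Matrix (Fin L) (Fin L) ℝ) (u : Fin L → ℝ) : Prop :=
  normSq u = 1 ∧ ∃ μ : ℝ, A.mulVec u = μ • u ∧
    ∀ (ν : ℝ) (v : Fin L → ℝ), v ≠ 0 → A.mulVec v = ν • v → ν ≤ μ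

/-- The discretized exponential signal `x_n = a^{nT/N}`. -/
noncomputable def xdisc (a T : ℝ) (N : ℕ) : ℕ → ℝ := fun n => a ^ ((n : ℝ) * T / (N : ℝ))

/-- The `L × K` Hankel matrix of the discretized signal. -/
noncomputable def Hd (a T : ℝ) (N L K : ℕ) : Matrix (Fin L) (Fin K) ℝ :=
  Matrix.of fun i k => xdisc a T N ((i : ℕ) + (k : ℕ))

/-- The `L × K` Hankel matrix of the harmonic noise `e_n = cos(ξ n + φ)`. -/
noncomputable def Ed (ξ φ : ℝ) (L K : ℕ) : Matrix (Fin L) (Fin K) ℝ :=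
  Matrix.of fun i k => Real.cos (ξ * (((i : ℕ) + (k : ℕ) : ℕ) : ℝ) + φ)

/-- The vector `W_M = (1, a^{T/N}, …, a^{(M-1)T/N})ᵀ`. -/
noncomputable def Wd (a T : ℝ) (N M : ℕ) : Fin M → ℝ := fun i => a ^ (((i : ℕ) : ℝ) * T / (N : ℝ))

/-- `B(δ) = δ(HEᵀ + EHᵀ) + δ²EEᵀ`. -/
noncomputable def Bmat (a T ξ φ δ : ℝ) (N L K : ℕ) : Matrix (Fin L) (Fin L) ℝ :=
  δ • (Hd a T N L K * (Ed ξ φ L K)ᵀ + Ed ξ φ L K * (Hd a T N L K)ᵀ)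
  + δ ^ 2 • (Ed ξ φ L K * (Ed ξ φ L K)ᵀ)

/-- The spectral (ℓ²-operator) norm of a matrix. -/
noncomputable def specNorm {m n : ℕ} (A : Matrix (Fin m) (Fin n) ℝ) : ℝ :=
  ‖(Matrix.toEuclideanLin A).toContinuousLinearMap‖

/-- The max-norm of a matrix: the maximum of the absolute values of its entries. -/
noncomputable def maxNorm {m n : ℕ} (A : Matrix (Fin m) (Fin n) ℝ) : ℝ :=
  ⨆ p : Fin m × Fin n, |A p.1 p.2|

set_option maxHeartbeats 1000000

-- ===== auxiliary lemmas =====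

open Finset in
private lemma osc_bound (ξ θ : ℝ) (hξ1 : 0 < ξ) (hξ2 : ξ < Real.pi) (r : ℝ) (hr : 1 ≤ r) (n : ℕ) :
    |∑ k ∈ Finset.range n, r ^ k * Real.cos (ξ * k + θ)| ≤
      (r ^ n + 1) / Real.sqrt (2 - 2 * Real.cos ξ) := by
  have hcos : Real.cos ξ < 1 := by
    calc Real.cos ξ < Real.cos 0 := by
          apply Real.cos_lt_cos_of_nonneg_of_le_pi le_rfl hξ2.le hξ1
      _ = 1 := Real.cos_zero
  have hspos : 0 < Real.sqrt (2 - 2 * Real.cos ξ) := Real.sqrt_pos.2 (by linarith)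
  set z : ℂ := (r : ℂ) * Complex.exp ((ξ : ℂ) * Complex.I) with hz
  have hzim : z.im = r * Real.sin ξ := by
    rw [hz, Complex.im_ofReal_mul, Complex.exp_ofReal_mul_I_im]
  have hsin : 0 < Real.sin ξ := Real.sin_pos_of_pos_of_lt_pi hξ1 hξ2
  have hz1 : z ≠ 1 := by
    intro h
    rw [h] at hzim
    simp at hzim
    rcases hzim with h0 | h0 <;> nlinarith
  have habsz : ‖z‖ = r := by
    rw [hz, norm_mul, Complex.norm_real, Real.norm_eq_abs, Complex.norm_exp_ofReal_mul_I, mul_one,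
      abs_of_nonneg (by linarith)]
  have hw : ∀ k : ℕ, ((r ^ k : ℝ) : ℂ) * Complex.exp (((ξ * k + θ : ℝ) : ℂ) * Complex.I)
      = z ^ k * Complex.exp ((θ : ℂ) * Complex.I) := by
    intro k
    rw [show (((ξ * k + θ : ℝ) : ℂ) * Complex.I) = (k : ℂ) * ((ξ : ℂ) * Complex.I)
          + (θ : ℂ) * Complex.I by push_cast; ring,
      Complex.exp_add, Complex.exp_nat_mul, hz, mul_pow]
    push_cast
    ring
  have hre : ∀ k : ℕ, r ^ k * Real.cos (ξ * k + θ)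
      = (z ^ k * Complex.exp ((θ : ℂ) * Complex.I)).re := by
    intro k
    rw [← hw k, Complex.re_ofReal_mul, Complex.exp_ofReal_mul_I_re]
  calc |∑ k ∈ Finset.range n, r ^ k * Real.cos (ξ * k + θ)|
      = |((∑ k ∈ Finset.range n, z ^ k) * Complex.exp ((θ : ℂ) * Complex.I)).re| := by
        rw [Finset.sum_mul, Complex.re_sum]
        congr 1
        exact Finset.sum_congr rfl fun k _ => hre k
    _ ≤ ‖(∑ k ∈ Finset.range n, z ^ k) * Complex.exp ((θ : ℂ) * Complex.I)‖ :=
        Complex.abs_re_le_norm _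
    _ = ‖∑ k ∈ Finset.range n, z ^ k‖ := by
        rw [norm_mul, Complex.norm_exp_ofReal_mul_I, mul_one]
    _ = ‖z ^ n - 1‖ / ‖z - 1‖ := by
        rw [geom_sum_eq hz1, norm_div]
    _ ≤ (r ^ n + 1) / Real.sqrt (2 - 2 * Real.cos ξ) := by
        have h1 : ‖z ^ n - 1‖ ≤ r ^ n + 1 := by
          calc ‖z ^ n - 1‖ ≤ ‖z ^ n‖ + ‖(1:ℂ)‖ :=
                norm_sub_le _ _
            _ = r ^ n + 1 := by rw [norm_pow, habsz, norm_one]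
        have h2 : Real.sqrt (2 - 2 * Real.cos ξ) ≤ ‖z - 1‖ := by
          have hre1 : (z - 1).re = r * Real.cos ξ - 1 := by
            simp [hz, Complex.re_ofReal_mul, Complex.exp_ofReal_mul_I_re]
          have him1 : (z - 1).im = r * Real.sin ξ := by
            simp [hz, Complex.im_ofReal_mul, Complex.exp_ofReal_mul_I_im]
          have hsq : 2 - 2 * Real.cos ξ ≤ ‖z - 1‖ ^ 2 := by
            rw [Complex.sq_norm, Complex.normSq_apply, hre1, him1]
            have hpyth := Real.sin_sq_add_cos_sq ξ
            have key : r * Real.cos ξ * (r * Real.cos ξ) + r * Real.sin ξ * (r * Real.sin ξ)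
                = r * r := by linear_combination (r * r) * hpyth
            nlinarith [key, mul_nonneg (sub_nonneg.2 hr)
              (by linarith : (0:ℝ) ≤ r + 1 - 2 * Real.cos ξ)]
          calc Real.sqrt (2 - 2 * Real.cos ξ) ≤ Real.sqrt (‖z - 1‖ ^ 2) :=
                Real.sqrt_le_sqrt hsq
            _ = ‖z - 1‖ := Real.sqrt_sq (norm_nonneg _)
        have hn : 0 ≤ r ^ n + 1 := by positivity
        exact div_le_div₀ hn h1 hspos h2

private lemma Wd_eq_pow (a T : ℝ) (ha : 0 < a) (N M : ℕ) (i : Fin M) :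
    Wd a T N M i = (a ^ (T / (N : ℝ))) ^ (i : ℕ) := by
  rw [Wd, ← Real.rpow_natCast (a ^ (T / (N : ℝ))) (i : ℕ), ← Real.rpow_mul ha.le]
  congr 1
  ring

/-- The constant `D` bounding all oscillating sums. -/
noncomputable def Dq (a T ξ : ℝ) : ℝ := (a ^ T + 1) / Real.sqrt (2 - 2 * Real.cos ξ)

private lemma oscW (a T ξ θ : ℝ) (ha : 1 < a) (hT : 0 ≤ T) (hξ1 : 0 < ξ) (hξ2 : ξ < Real.pi)
    (N m : ℕ) (hm : m ≤ N) :
    |∑ k : Fin m, Wd a T N m k * Real.cos (ξ * (k : ℕ) + θ)| ≤ Dq a T ξ := by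
  have ha0 : (0 : ℝ) < a := lt_trans one_pos ha
  have hcos : Real.cos ξ < 1 := by
    calc Real.cos ξ < Real.cos 0 := Real.cos_lt_cos_of_nonneg_of_le_pi le_rfl hξ2.le hξ1
      _ = 1 := Real.cos_zero
  have hspos : 0 < Real.sqrt (2 - 2 * Real.cos ξ) := Real.sqrt_pos.2 (by linarith)
  have hdivnn : (0:ℝ) ≤ T / (N:ℝ) := by positivity
  set r : ℝ := a ^ (T / (N : ℝ)) with hrdef
  have hr : 1 ≤ r := by
    calc (1:ℝ) = a ^ (0:ℝ) := (Real.rpow_zero a).symm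
      _ ≤ r := Real.rpow_le_rpow_of_exponent_le ha.le hdivnn
  have hsum : ∑ k : Fin m, Wd a T N m k * Real.cos (ξ * (k : ℕ) + θ)
      = ∑ k ∈ Finset.range m, r ^ k * Real.cos (ξ * k + θ) := by
    rw [← Fin.sum_univ_eq_sum_range (fun k => r ^ k * Real.cos (ξ * k + θ)) m]
    exact Finset.sum_congr rfl fun k _ => by rw [Wd_eq_pow a T ha0]
  rw [hsum]
  refine le_trans (osc_bound ξ θ hξ1 hξ2 r hr m) ?_
  have hrm : r ^ m ≤ a ^ T := by
    rw [← Wd_eq_pow a T ha0 N (m+1) ⟨m, Nat.lt_succ_self m⟩, Wd]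
    apply Real.rpow_le_rpow_of_exponent_le ha.le
    rcases Nat.eq_zero_or_pos N with h | h
    · simp [h, hT]
    · have hn : (0:ℝ) < N := by exact_mod_cast h
      rw [div_le_iff₀ hn]
      have hmN : ((⟨m, Nat.lt_succ_self m⟩ : Fin (m+1)) : ℝ) ≤ (N:ℝ) := by exact_mod_cast hm
      nlinarith
  rw [Dq]
  gcongr

private lemma oscE_row (a T ξ φ : ℝ) (ha : 1 < a) (hT : 0 ≤ T) (hξ1 : 0 < ξ)
    (hξ2 : ξ < Real.pi) (N L K : ℕ) (hK : K ≤ N) (j : Fin L) :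
    |∑ k : Fin K, Wd a T N K k * Ed ξ φ L K j k| ≤ Dq a T ξ := by
  have hc : ∀ k : Fin K, Wd a T N K k * Ed ξ φ L K j k
      = Wd a T N K k * Real.cos (ξ * (k : ℕ) + (ξ * (j : ℕ) + φ)) := by
    intro k
    congr 1
    show Real.cos _ = _
    congr 1
    push_cast
    ring
  rw [Finset.sum_congr rfl fun k _ => hc k]
  exact oscW a T ξ (ξ * (j : ℕ) + φ) ha hT hξ1 hξ2 N K hK

private lemma oscE_col (a T ξ φ : ℝ) (ha : 1 < a) (hT : 0 ≤ T) (hξ1 : 0 < ξ)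
    (hξ2 : ξ < Real.pi) (N L K : ℕ) (hL : L ≤ N) (k : Fin K) :
    |∑ l : Fin L, Wd a T N L l * Ed ξ φ L K l k| ≤ Dq a T ξ := by
  have hc : ∀ l : Fin L, Wd a T N L l * Ed ξ φ L K l k
      = Wd a T N L l * Real.cos (ξ * (l : ℕ) + (ξ * (k : ℕ) + φ)) := by
    intro l
    congr 1
    show Real.cos _ = _
    congr 1
    push_cast
    ring
  rw [Finset.sum_congr rfl fun l _ => hc l]
  exact oscW a T ξ (ξ * (k : ℕ) + φ) ha hT hξ1 hξ2 N L hL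

private lemma Hd_apply (a T : ℝ) (ha : 0 < a) (N L K : ℕ) (i : Fin L) (k : Fin K) :
    Hd a T N L K i k = Wd a T N L i * Wd a T N K k := by
  show xdisc a T N ((i : ℕ) + (k : ℕ)) = _
  rw [xdisc, Wd, Wd, ← Real.rpow_add ha]
  congr 1
  push_cast
  ring

noncomputable def C1q (a T ξ δ : ℝ) : ℝ :=
  2 * |δ| * (a ^ T) ^ 2 * Dq a T ξ + δ ^ 2 * Dq a T ξ

noncomputable def CC (a T ξ δ β : ℝ) : ℝ :=
  a ^ T * C1q a T ξ δ / β ^ 3 + C1q a T ξ δ * Dq a T ξ / β ^ 3 + a ^ T * Dq a T ξ / β + 1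

private lemma apow_pos (a T : ℝ) (ha : 1 < a) : (0:ℝ) < a ^ T :=
  Real.rpow_pos_of_pos (lt_trans one_pos ha) T

private lemma apow_one_le (a T : ℝ) (ha : 1 < a) (hT : 0 ≤ T) : (1:ℝ) ≤ a ^ T := by
  calc (1:ℝ) = a ^ (0:ℝ) := (Real.rpow_zero a).symm
    _ ≤ a ^ T := Real.rpow_le_rpow_of_exponent_le ha.le hT

private lemma Dq_pos (a T ξ : ℝ) (ha : 1 < a) (hξ1 : 0 < ξ) (hξ2 : ξ < Real.pi) :
    0 < Dq a T ξ := by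
  have hcos : Real.cos ξ < 1 := by
    calc Real.cos ξ < Real.cos 0 := Real.cos_lt_cos_of_nonneg_of_le_pi le_rfl hξ2.le hξ1
      _ = 1 := Real.cos_zero
  have hspos : 0 < Real.sqrt (2 - 2 * Real.cos ξ) := Real.sqrt_pos.2 (by linarith)
  have := apow_pos a T ha
  rw [Dq]
  positivity

private lemma C1q_nonneg (a T ξ δ : ℝ) (ha : 1 < a) (hξ1 : 0 < ξ) (hξ2 : ξ < Real.pi) :
    0 ≤ C1q a T ξ δ := by
  have hD := (Dq_pos a T ξ ha hξ1 hξ2).le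
  rw [C1q]
  have h1 : 0 ≤ 2 * |δ| * (a ^ T) ^ 2 * Dq a T ξ := by positivity
  have h2 : 0 ≤ δ ^ 2 * Dq a T ξ := by positivity
  linarith

private lemma CC_pos (a T ξ δ β : ℝ) (ha : 1 < a) (hξ1 : 0 < ξ) (hξ2 : ξ < Real.pi)
    (hβ : 0 < β) : 0 < CC a T ξ δ β := by
  have hD := (Dq_pos a T ξ ha hξ1 hξ2).le
  have hC1 := C1q_nonneg a T ξ δ ha hξ1 hξ2
  have hA := (apow_pos a T ha).le
  rw [CC]
  have h1 : 0 ≤ a ^ T * C1q a T ξ δ / β ^ 3 := by positivity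
  have h2 : 0 ≤ C1q a T ξ δ * Dq a T ξ / β ^ 3 := by positivity
  have h3 : 0 ≤ a ^ T * Dq a T ξ / β := by positivity
  linarith

/-- Entrywise formula for `Bmat`. -/
private lemma Bmat_apply (a T ξ φ δ : ℝ) (ha : 1 < a) (N L K : ℕ) (l j : Fin L) :
    Bmat a T ξ φ δ N L K l j =
      δ * ((∑ k : Fin K, (Wd a T N L l * Wd a T N K k) * Ed ξ φ L K j k)
        + (∑ k : Fin K, Ed ξ φ L K l k * (Wd a T N L j * Wd a T N K k)))
      + δ ^ 2 * (∑ k : Fin K, Ed ξ φ L K l k * Ed ξ φ L K j k) := by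
  have ha0 : (0:ℝ) < a := lt_trans one_pos ha
  simp only [Bmat, Matrix.add_apply, Matrix.smul_apply, Matrix.mul_apply,
    Matrix.transpose_apply, smul_eq_mul, Hd_apply a T ha0 N L K]

private lemma Bmat_symm (a T ξ φ δ : ℝ) (ha : 1 < a) (N L K : ℕ) (l j : Fin L) :
    Bmat a T ξ φ δ N L K l j = Bmat a T ξ φ δ N L K j l := by
  rw [Bmat_apply a T ξ φ δ ha N L K l j, Bmat_apply a T ξ φ δ ha N L K j l]
  have c1 : ∑ k : Fin K, (Wd a T N L l * Wd a T N K k) * Ed ξ φ L K j k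
      = ∑ k : Fin K, Ed ξ φ L K j k * (Wd a T N L l * Wd a T N K k) :=
    Finset.sum_congr rfl fun k _ => mul_comm _ _
  have c2 : ∑ k : Fin K, Ed ξ φ L K l k * (Wd a T N L j * Wd a T N K k)
      = ∑ k : Fin K, (Wd a T N L j * Wd a T N K k) * Ed ξ φ L K l k :=
    Finset.sum_congr rfl fun k _ => mul_comm _ _
  have c3 : ∑ k : Fin K, Ed ξ φ L K l k * Ed ξ φ L K j k
      = ∑ k : Fin K, Ed ξ φ L K j k * Ed ξ φ L K l k :=
    Finset.sum_congr rfl fun k _ => mul_comm _ _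
  rw [c1, c2, c3]
  ring

private lemma Ed_abs_le (ξ φ : ℝ) (L K : ℕ) (l : Fin L) (k : Fin K) :
    |Ed ξ φ L K l k| ≤ 1 := Real.abs_cos_le_one _

/-- The key cancellation bound: `|∑_l W_l B(δ)_{l j}| ≤ N · C1`. -/
private lemma keyB (a T ξ φ δ : ℝ) (ha : 1 < a) (hT : 0 < T) (hξ1 : 0 < ξ)
    (hξ2 : ξ < Real.pi) (N L K : ℕ) (hLN : L ≤ N) (hKN : K ≤ N) (j : Fin L) :
    |∑ l : Fin L, Wd a T N L l * Bmat a T ξ φ δ N L K l j| ≤ N * C1q a T ξ δ := by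
  have ha0 : (0:ℝ) < a := lt_trans one_pos ha
  set W : Fin L → ℝ := Wd a T N L with hWdef
  set V : Fin K → ℝ := Wd a T N K with hVdef
  set Em : Matrix (Fin L) (Fin K) ℝ := Ed ξ φ L K with hEdef
  set A : ℝ := a ^ T with hAdef
  set D : ℝ := Dq a T ξ with hDdef
  have hD0 : 0 < D := Dq_pos a T ξ ha hξ1 hξ2
  have hA1 : 1 ≤ A := apow_one_le a T ha hT.le
  have hA0 : 0 < A := apow_pos a T ha
  have hW1 : ∀ i : Fin L, 1 ≤ W i := by
    intro i
    calc (1:ℝ) = a ^ (0:ℝ) := (Real.rpow_zero a).symm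
      _ ≤ W i := Real.rpow_le_rpow_of_exponent_le ha.le (by positivity)
  have hNc : (0:ℝ) ≤ (N:ℝ) := Nat.cast_nonneg N
  have hWA : ∀ i : Fin L, W i ≤ A := by
    intro i
    rw [hWdef, hAdef, Wd]
    apply Real.rpow_le_rpow_of_exponent_le ha.le
    rcases Nat.eq_zero_or_pos N with h | h
    · simp [h, hT.le]
    · have hn : (0:ℝ) < N := by exact_mod_cast h
      rw [div_le_iff₀ hn]
      have : ((i:ℕ):ℝ) ≤ (N:ℝ) := by exact_mod_cast le_trans i.isLt.le hLN
      nlinarith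
  have hVA : ∀ i : Fin K, V i ≤ A := by
    intro i
    rw [hVdef, hAdef, Wd]
    apply Real.rpow_le_rpow_of_exponent_le ha.le
    rcases Nat.eq_zero_or_pos N with h | h
    · simp [h, hT.le]
    · have hn : (0:ℝ) < N := by exact_mod_cast h
      rw [div_le_iff₀ hn]
      have : ((i:ℕ):ℝ) ≤ (N:ℝ) := by exact_mod_cast le_trans i.isLt.le hKN
      nlinarith
  have hV0 : ∀ i : Fin K, 0 ≤ V i := by
    intro i
    have : (1:ℝ) = a ^ (0:ℝ) := (Real.rpow_zero a).symm
    have h1 : (1:ℝ) ≤ V i := by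
      calc (1:ℝ) = a ^ (0:ℝ) := (Real.rpow_zero a).symm
        _ ≤ V i := Real.rpow_le_rpow_of_exponent_le ha.le (by positivity)
    linarith
  have hrow : |∑ k : Fin K, V k * Em j k| ≤ D :=
    oscE_row a T ξ φ ha hT.le hξ1 hξ2 N L K hKN j
  have hcol : ∀ k : Fin K, |∑ l : Fin L, W l * Em l k| ≤ D := fun k =>
    oscE_col a T ξ φ ha hT.le hξ1 hξ2 N L K hLN k
  have hWsq : ∑ l : Fin L, W l ^ 2 ≤ (N:ℝ) * A ^ 2 := by
    calc ∑ l : Fin L, W l ^ 2 ≤ ∑ _l : Fin L, A ^ 2 := by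
          refine Finset.sum_le_sum fun l _ => ?_
          have h1 := hW1 l
          have h2 := hWA l
          nlinarith
      _ = (L:ℝ) * A ^ 2 := by
          rw [Finset.sum_const, Finset.card_univ, Fintype.card_fin, nsmul_eq_mul]
      _ ≤ (N:ℝ) * A ^ 2 := by
          have : (L:ℝ) ≤ (N:ℝ) := by exact_mod_cast hLN
          nlinarith
  have hWsq0 : 0 ≤ ∑ l : Fin L, W l ^ 2 := Finset.sum_nonneg fun l _ => sq_nonneg _
  -- the expansion
  have expand : ∑ l : Fin L, W l * Bmat a T ξ φ δ N L K l j
      = δ * ((∑ l : Fin L, W l ^ 2) * (∑ k : Fin K, V k * Em j k))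
      + δ * (W j * ∑ k : Fin K, V k * (∑ l : Fin L, W l * Em l k))
      + δ ^ 2 * (∑ k : Fin K, (∑ l : Fin L, W l * Em l k) * Em j k) := by
    have h1 : ∀ l : Fin L, W l * Bmat a T ξ φ δ N L K l j
        = δ * (W l ^ 2 * (∑ k : Fin K, V k * Em j k))
        + δ * (∑ k : Fin K, W l * Em l k * (W j * V k))
        + δ ^ 2 * (∑ k : Fin K, W l * (Em l k * Em j k)) := by
      intro l
      rw [Bmat_apply a T ξ φ δ ha N L K l j]
      have e1 : W l * (∑ k : Fin K, (W l * V k) * Em j k)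
          = W l ^ 2 * (∑ k : Fin K, V k * Em j k) := by
        rw [Finset.mul_sum, Finset.mul_sum]
        exact Finset.sum_congr rfl fun k _ => by ring
      have e2 : W l * (∑ k : Fin K, Em l k * (W j * V k))
          = ∑ k : Fin K, W l * Em l k * (W j * V k) := by
        rw [Finset.mul_sum]
        exact Finset.sum_congr rfl fun k _ => by ring
      have e3 : W l * (∑ k : Fin K, Em l k * Em j k)
          = ∑ k : Fin K, W l * (Em l k * Em j k) := by rw [Finset.mul_sum]
      calc W l * (δ * ((∑ k : Fin K, (W l * V k) * Em j k)
              + (∑ k : Fin K, Em l k * (W j * V k)))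
            + δ ^ 2 * (∑ k : Fin K, Em l k * Em j k))
          = δ * (W l * (∑ k : Fin K, (W l * V k) * Em j k))
            + δ * (W l * (∑ k : Fin K, Em l k * (W j * V k)))
            + δ ^ 2 * (W l * (∑ k : Fin K, Em l k * Em j k)) := by ring
        _ = _ := by rw [e1, e2, e3]
    rw [Finset.sum_congr rfl fun l _ => h1 l, Finset.sum_add_distrib, Finset.sum_add_distrib]
    congr 1
    · congr 1
      · calc ∑ l : Fin L, δ * (W l ^ 2 * (∑ k : Fin K, V k * Em j k))
            = ∑ l : Fin L, W l ^ 2 * (δ * (∑ k : Fin K, V k * Em j k)) :=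
              Finset.sum_congr rfl fun l _ => by ring
          _ = (∑ l : Fin L, W l ^ 2) * (δ * (∑ k : Fin K, V k * Em j k)) :=
              (Finset.sum_mul _ _ _).symm
          _ = δ * ((∑ l : Fin L, W l ^ 2) * (∑ k : Fin K, V k * Em j k)) := by ring
      · calc ∑ l : Fin L, δ * (∑ k : Fin K, W l * Em l k * (W j * V k))
            = ∑ l : Fin L, ∑ k : Fin K, δ * (W l * Em l k * (W j * V k)) :=
              Finset.sum_congr rfl fun l _ => Finset.mul_sum _ _ _
          _ = ∑ k : Fin K, ∑ l : Fin L, δ * (W l * Em l k * (W j * V k)) := Finset.sum_comm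
          _ = ∑ k : Fin K, δ * (W j * (V k * (∑ l : Fin L, W l * Em l k))) := by
              refine Finset.sum_congr rfl fun k _ => ?_
              calc ∑ l : Fin L, δ * (W l * Em l k * (W j * V k))
                  = ∑ l : Fin L, (W l * Em l k) * (δ * (W j * V k)) :=
                    Finset.sum_congr rfl fun l _ => by ring
                _ = (∑ l : Fin L, W l * Em l k) * (δ * (W j * V k)) :=
                    (Finset.sum_mul _ _ _).symm
                _ = δ * (W j * (V k * (∑ l : Fin L, W l * Em l k))) := by ring
          _ = δ * (W j * ∑ k : Fin K, V k * (∑ l : Fin L, W l * Em l k)) := by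
              rw [show W j * ∑ k : Fin K, V k * (∑ l : Fin L, W l * Em l k)
                  = ∑ k : Fin K, W j * (V k * (∑ l : Fin L, W l * Em l k)) from
                  Finset.mul_sum _ _ _, Finset.mul_sum]
    · calc ∑ l : Fin L, δ ^ 2 * (∑ k : Fin K, W l * (Em l k * Em j k))
          = ∑ l : Fin L, ∑ k : Fin K, δ ^ 2 * (W l * (Em l k * Em j k)) :=
            Finset.sum_congr rfl fun l _ => Finset.mul_sum _ _ _
        _ = ∑ k : Fin K, ∑ l : Fin L, δ ^ 2 * (W l * (Em l k * Em j k)) := Finset.sum_comm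
        _ = ∑ k : Fin K, δ ^ 2 * ((∑ l : Fin L, W l * Em l k) * Em j k) := by
            refine Finset.sum_congr rfl fun k _ => ?_
            calc ∑ l : Fin L, δ ^ 2 * (W l * (Em l k * Em j k))
                = ∑ l : Fin L, (W l * Em l k) * (δ ^ 2 * Em j k) :=
                  Finset.sum_congr rfl fun l _ => by ring
              _ = (∑ l : Fin L, W l * Em l k) * (δ ^ 2 * Em j k) := (Finset.sum_mul _ _ _).symm
              _ = δ ^ 2 * ((∑ l : Fin L, W l * Em l k) * Em j k) := by ring
        _ = δ ^ 2 * (∑ k : Fin K, (∑ l : Fin L, W l * Em l k) * Em j k) :=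
            (Finset.mul_sum _ _ _).symm
  -- now the bound
  rw [expand]
  have hX : |(∑ l : Fin L, W l ^ 2) * (∑ k : Fin K, V k * Em j k)| ≤ ((N:ℝ) * A ^ 2) * D := by
    rw [abs_mul, abs_of_nonneg hWsq0]
    exact mul_le_mul hWsq hrow (abs_nonneg _) (by positivity)
  have hY : |∑ k : Fin K, V k * (∑ l : Fin L, W l * Em l k)| ≤ (N:ℝ) * (A * D) := by
    calc |∑ k : Fin K, V k * (∑ l : Fin L, W l * Em l k)|
        ≤ ∑ k : Fin K, |V k * (∑ l : Fin L, W l * Em l k)| := Finset.abs_sum_le_sum_abs _ _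
      _ ≤ ∑ _k : Fin K, A * D := by
          refine Finset.sum_le_sum fun k _ => ?_
          rw [abs_mul]
          have h1 : |V k| ≤ A := by rw [abs_of_nonneg (hV0 k)]; exact hVA k
          exact mul_le_mul h1 (hcol k) (abs_nonneg _) (by linarith)
      _ = (K:ℝ) * (A * D) := by
          rw [Finset.sum_const, Finset.card_univ, Fintype.card_fin, nsmul_eq_mul]
      _ ≤ (N:ℝ) * (A * D) := by
          have hKNr : (K:ℝ) ≤ (N:ℝ) := by exact_mod_cast hKN
          exact mul_le_mul_of_nonneg_right hKNr (by positivity)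
  have hZ : |∑ k : Fin K, (∑ l : Fin L, W l * Em l k) * Em j k| ≤ (N:ℝ) * D := by
    calc |∑ k : Fin K, (∑ l : Fin L, W l * Em l k) * Em j k|
        ≤ ∑ k : Fin K, |(∑ l : Fin L, W l * Em l k) * Em j k| := Finset.abs_sum_le_sum_abs _ _
      _ ≤ ∑ _k : Fin K, D := by
          refine Finset.sum_le_sum fun k _ => ?_
          rw [abs_mul]
          have h1 := mul_le_mul (hcol k) (Ed_abs_le ξ φ L K j k) (abs_nonneg _) hD0.le
          simpa using h1
      _ = (K:ℝ) * D := by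
          rw [Finset.sum_const, Finset.card_univ, Fintype.card_fin, nsmul_eq_mul]
      _ ≤ (N:ℝ) * D := by
          have hKNr : (K:ℝ) ≤ (N:ℝ) := by exact_mod_cast hKN
          exact mul_le_mul_of_nonneg_right hKNr hD0.le
  have hWjA : |W j| ≤ A := by
    rw [abs_of_nonneg (by linarith [hW1 j])]
    exact hWA j
  calc |δ * ((∑ l : Fin L, W l ^ 2) * (∑ k : Fin K, V k * Em j k))
        + δ * (W j * ∑ k : Fin K, V k * (∑ l : Fin L, W l * Em l k))
        + δ ^ 2 * (∑ k : Fin K, (∑ l : Fin L, W l * Em l k) * Em j k)|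
      ≤ |δ * ((∑ l : Fin L, W l ^ 2) * (∑ k : Fin K, V k * Em j k))|
        + |δ * (W j * ∑ k : Fin K, V k * (∑ l : Fin L, W l * Em l k))|
        + |δ ^ 2 * (∑ k : Fin K, (∑ l : Fin L, W l * Em l k) * Em j k)| := by
        have t1 := abs_add_le
          (δ * ((∑ l : Fin L, W l ^ 2) * (∑ k : Fin K, V k * Em j k))
            + δ * (W j * ∑ k : Fin K, V k * (∑ l : Fin L, W l * Em l k)))
          (δ ^ 2 * (∑ k : Fin K, (∑ l : Fin L, W l * Em l k) * Em j k))
        have t2 := abs_add_le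
          (δ * ((∑ l : Fin L, W l ^ 2) * (∑ k : Fin K, V k * Em j k)))
          (δ * (W j * ∑ k : Fin K, V k * (∑ l : Fin L, W l * Em l k)))
        linarith
    _ ≤ |δ| * (((N:ℝ) * A ^ 2) * D) + |δ| * (A * ((N:ℝ) * (A * D))) + δ ^ 2 * ((N:ℝ) * D) := by
        have h1 : |δ * ((∑ l : Fin L, W l ^ 2) * (∑ k : Fin K, V k * Em j k))|
            ≤ |δ| * (((N:ℝ) * A ^ 2) * D) := by
          rw [abs_mul]
          exact mul_le_mul_of_nonneg_left hX (abs_nonneg δ)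
        have h2 : |δ * (W j * ∑ k : Fin K, V k * (∑ l : Fin L, W l * Em l k))|
            ≤ |δ| * (A * ((N:ℝ) * (A * D))) := by
          rw [abs_mul, abs_mul]
          exact mul_le_mul_of_nonneg_left
            (mul_le_mul hWjA hY (abs_nonneg _) hA0.le) (abs_nonneg δ)
        have h3 : |δ ^ 2 * (∑ k : Fin K, (∑ l : Fin L, W l * Em l k) * Em j k)|
            ≤ δ ^ 2 * ((N:ℝ) * D) := by
          rw [abs_mul, abs_pow, sq_abs]
          exact mul_le_mul_of_nonneg_left hZ (sq_nonneg δ)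
        linarith
    _ = (N:ℝ) * C1q a T ξ δ := by rw [C1q, ← hAdef, ← hDdef]; ring

private lemma core (a T ξ φ δ β : ℝ) (ha : 1 < a) (hT : 0 < T) (hξ1 : 0 < ξ)
    (hξ2 : ξ < Real.pi) (hβ : 0 < β) (N L K : ℕ) (hL : 1 < L) (hK : 1 < K)
    (hLKN : L + K = N + 1) (hLb : β * N ≤ L) (hKb : β * N ≤ K) :
    maxNorm ((((normSq (Wd a T N L)) ^ 2 * normSq (Wd a T N K))⁻¹ •
        Matrix.vecMulVec (Wd a T N L) (Wd a T N L)) * Bmat a T ξ φ δ N L K)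
      ≤ CC a T ξ δ β / (N : ℝ) ^ 2 ∧
    maxNorm (Bmat a T ξ φ δ N L K * (((normSq (Wd a T N L)) ^ 2 * normSq (Wd a T N K))⁻¹ •
        Matrix.vecMulVec (Wd a T N L) (Wd a T N L)) * Ed ξ φ L K)
      ≤ CC a T ξ δ β / (N : ℝ) ^ 2 ∧
    maxNorm (((normSq (Wd a T N L))⁻¹ •
        Matrix.vecMulVec (Wd a T N L) (Wd a T N L)) * Ed ξ φ L K)
      ≤ CC a T ξ δ β / (N : ℝ) := by
  have ha0 : (0:ℝ) < a := lt_trans one_pos ha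
  have hN3 : 3 ≤ N := by omega
  have hn : (0:ℝ) < N := by exact_mod_cast (by omega : 0 < N)
  have hLN : L ≤ N := by omega
  have hKN : K ≤ N := by omega
  set W : Fin L → ℝ := Wd a T N L with hWdef
  set V : Fin K → ℝ := Wd a T N K with hVdef
  set A : ℝ := a ^ T with hAdef
  set D : ℝ := Dq a T ξ with hDdef
  have hD0 : 0 < D := Dq_pos a T ξ ha hξ1 hξ2
  have hA1 : 1 ≤ A := apow_one_le a T ha hT.le
  have hA0 : 0 < A := apow_pos a T ha
  have hC1 : 0 ≤ C1q a T ξ δ := C1q_nonneg a T ξ δ ha hξ1 hξ2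
  have hW1 : ∀ i : Fin L, 1 ≤ W i := by
    intro i
    calc (1:ℝ) = a ^ (0:ℝ) := (Real.rpow_zero a).symm
      _ ≤ W i := Real.rpow_le_rpow_of_exponent_le ha.le (by positivity)
  have hWA : ∀ i : Fin L, W i ≤ A := by
    intro i
    rw [hWdef, hAdef, Wd]
    apply Real.rpow_le_rpow_of_exponent_le ha.le
    rw [div_le_iff₀ hn]
    have : ((i:ℕ):ℝ) ≤ (N:ℝ) := by exact_mod_cast le_trans i.isLt.le hLN
    nlinarith
  -- lower bounds on the squared norms
  have hnW_lo : β * N ≤ normSq W := by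
    calc β * N ≤ (L:ℝ) := hLb
      _ = ∑ _i : Fin L, (1:ℝ) := by
          rw [Finset.sum_const, Finset.card_univ, Fintype.card_fin, nsmul_eq_mul, mul_one]
      _ ≤ normSq W := Finset.sum_le_sum fun i _ => by have := hW1 i; nlinarith
  have hnV_lo : β * N ≤ normSq V := by
    have hV1 : ∀ i : Fin K, 1 ≤ V i := by
      intro i
      calc (1:ℝ) = a ^ (0:ℝ) := (Real.rpow_zero a).symm
        _ ≤ V i := Real.rpow_le_rpow_of_exponent_le ha.le (by positivity)
    calc β * N ≤ (K:ℝ) := hKb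
      _ = ∑ _i : Fin K, (1:ℝ) := by
          rw [Finset.sum_const, Finset.card_univ, Fintype.card_fin, nsmul_eq_mul, mul_one]
      _ ≤ normSq V := Finset.sum_le_sum fun i _ => by have := hV1 i; nlinarith
  have hβN : (0:ℝ) < β * N := by positivity
  have hnW_pos : 0 < normSq W := lt_of_lt_of_le hβN hnW_lo
  have hnV_pos : 0 < normSq V := lt_of_lt_of_le hβN hnV_lo
  have hc_lo : β ^ 3 * (N:ℝ) ^ 3 ≤ normSq W ^ 2 * normSq V := by
    have h1 : (β * N) ^ 2 ≤ normSq W ^ 2 := by nlinarith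
    have h2 : (β * N) ^ 2 * (β * N) ≤ normSq W ^ 2 * normSq V :=
      mul_le_mul h1 hnV_lo hβN.le (by positivity)
    calc β ^ 3 * (N:ℝ) ^ 3 = (β * N) ^ 2 * (β * N) := by ring
      _ ≤ _ := h2
  have hc3pos : (0:ℝ) < β ^ 3 * (N:ℝ) ^ 3 := by positivity
  have hc_pos : 0 < normSq W ^ 2 * normSq V := lt_of_lt_of_le hc3pos hc_lo
  have hcinv : (normSq W ^ 2 * normSq V)⁻¹ ≤ (β ^ 3 * (N:ℝ) ^ 3)⁻¹ :=
    inv_anti₀ hc3pos hc_lo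
  have hcinv0 : 0 ≤ (normSq W ^ 2 * normSq V)⁻¹ := inv_nonneg.2 hc_pos.le
  have hcolE : ∀ j : Fin K, |∑ l : Fin L, W l * Ed ξ φ L K l j| ≤ D := fun j =>
    oscE_col a T ξ φ ha hT.le hξ1 hξ2 N L K hLN j
  have hKeyB : ∀ j : Fin L, |∑ l : Fin L, W l * Bmat a T ξ φ δ N L K l j|
      ≤ (N:ℝ) * C1q a T ξ δ := fun j =>
    keyB a T ξ φ δ ha hT hξ1 hξ2 N L K hLN hKN j
  have hNE_LL : Nonempty (Fin L × Fin L) := ⟨(⟨0, by omega⟩, ⟨0, by omega⟩)⟩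
  have hNE_LK : Nonempty (Fin L × Fin K) := ⟨(⟨0, by omega⟩, ⟨0, by omega⟩)⟩
  -- nonnegativity of the CC summands
  have hCC1 : A * C1q a T ξ δ / β ^ 3 ≤ CC a T ξ δ β := by
    rw [CC, ← hAdef, ← hDdef]
    have u1 : 0 ≤ C1q a T ξ δ * D / β ^ 3 := by positivity
    have u2 : 0 ≤ A * D / β := by positivity
    linarith
  have hCC2 : C1q a T ξ δ * D / β ^ 3 ≤ CC a T ξ δ β := by
    rw [CC, ← hAdef, ← hDdef]
    have u1 : 0 ≤ A * C1q a T ξ δ / β ^ 3 := by positivity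
    have u2 : 0 ≤ A * D / β := by positivity
    linarith
  have hCC3 : A * D / β ≤ CC a T ξ δ β := by
    rw [CC, ← hAdef, ← hDdef]
    have u1 : 0 ≤ A * C1q a T ξ δ / β ^ 3 := by positivity
    have u2 : 0 ≤ C1q a T ξ δ * D / β ^ 3 := by positivity
    linarith
  refine ⟨?_, ?_, ?_⟩
  · -- first bound : S₀ B(δ)
    apply ciSup_le
    rintro ⟨i, j⟩
    have hent : ((((normSq W) ^ 2 * normSq V)⁻¹ • Matrix.vecMulVec W W)
          * Bmat a T ξ φ δ N L K) i j
        = (normSq W ^ 2 * normSq V)⁻¹ * W i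
            * (∑ l : Fin L, W l * Bmat a T ξ φ δ N L K l j) := by
      rw [Matrix.mul_apply]
      simp only [Matrix.smul_apply, Matrix.vecMulVec_apply, smul_eq_mul]
      calc ∑ l : Fin L, (normSq W ^ 2 * normSq V)⁻¹ * (W i * W l) * Bmat a T ξ φ δ N L K l j
          = ∑ l : Fin L, (normSq W ^ 2 * normSq V)⁻¹ * W i * (W l * Bmat a T ξ φ δ N L K l j) :=
            Finset.sum_congr rfl fun l _ => by ring
        _ = (normSq W ^ 2 * normSq V)⁻¹ * W i
            * (∑ l : Fin L, W l * Bmat a T ξ φ δ N L K l j) := (Finset.mul_sum _ _ _).symm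
    rw [hent]
    calc |(normSq W ^ 2 * normSq V)⁻¹ * W i * (∑ l : Fin L, W l * Bmat a T ξ φ δ N L K l j)|
        = (normSq W ^ 2 * normSq V)⁻¹ * |W i|
            * |∑ l : Fin L, W l * Bmat a T ξ φ δ N L K l j| := by
          rw [abs_mul, abs_mul, abs_of_nonneg hcinv0]
      _ ≤ (β ^ 3 * (N:ℝ) ^ 3)⁻¹ * A * ((N:ℝ) * C1q a T ξ δ) := by
          have hWiA : |W i| ≤ A := by
            rw [abs_of_nonneg (by linarith [hW1 i])]; exact hWA i
          exact mul_le_mul (mul_le_mul hcinv hWiA (abs_nonneg _) (by positivity))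
            (hKeyB j) (abs_nonneg _) (by positivity)
      _ = A * C1q a T ξ δ / β ^ 3 / (N:ℝ) ^ 2 := by
          field_simp
      _ ≤ CC a T ξ δ β / (N:ℝ) ^ 2 := by
          exact div_le_div_of_nonneg_right hCC1 (by positivity)
  · -- second bound : B(δ) S₀ E
    apply ciSup_le
    rintro ⟨i, j⟩
    have hG : |∑ m : Fin L, Bmat a T ξ φ δ N L K i m * W m| ≤ (N:ℝ) * C1q a T ξ δ := by
      have hsw : ∑ m : Fin L, Bmat a T ξ φ δ N L K i m * W m
          = ∑ m : Fin L, W m * Bmat a T ξ φ δ N L K m i :=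
        Finset.sum_congr rfl fun m _ => by
          rw [Bmat_symm a T ξ φ δ ha N L K i m]; ring
      rw [hsw]
      exact hKeyB i
    have hBP : ∀ l : Fin L,
        (Bmat a T ξ φ δ N L K * (((normSq W) ^ 2 * normSq V)⁻¹ • Matrix.vecMulVec W W)) i l
        = (normSq W ^ 2 * normSq V)⁻¹ * (∑ m : Fin L, Bmat a T ξ φ δ N L K i m * W m) * W l := by
      intro l
      rw [Matrix.mul_apply]
      simp only [Matrix.smul_apply, Matrix.vecMulVec_apply, smul_eq_mul]
      calc ∑ m : Fin L, Bmat a T ξ φ δ N L K i m * ((normSq W ^ 2 * normSq V)⁻¹ * (W m * W l))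
          = ∑ m : Fin L, (normSq W ^ 2 * normSq V)⁻¹ * (Bmat a T ξ φ δ N L K i m * W m) * W l :=
            Finset.sum_congr rfl fun m _ => by ring
        _ = (∑ m : Fin L, (normSq W ^ 2 * normSq V)⁻¹ * (Bmat a T ξ φ δ N L K i m * W m)) * W l :=
            (Finset.sum_mul _ _ _).symm
        _ = ((normSq W ^ 2 * normSq V)⁻¹ * ∑ m : Fin L, Bmat a T ξ φ δ N L K i m * W m) * W l := by
            rw [Finset.mul_sum]
        _ = (normSq W ^ 2 * normSq V)⁻¹ * (∑ m : Fin L, Bmat a T ξ φ δ N L K i m * W m) * W l := by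
            ring
    have hent : (Bmat a T ξ φ δ N L K * (((normSq W) ^ 2 * normSq V)⁻¹ • Matrix.vecMulVec W W)
          * Ed ξ φ L K) i j
        = (normSq W ^ 2 * normSq V)⁻¹ * (∑ m : Fin L, Bmat a T ξ φ δ N L K i m * W m)
            * (∑ l : Fin L, W l * Ed ξ φ L K l j) := by
      rw [Matrix.mul_apply]
      calc ∑ l : Fin L,
            (Bmat a T ξ φ δ N L K * (((normSq W) ^ 2 * normSq V)⁻¹ • Matrix.vecMulVec W W)) i l
              * Ed ξ φ L K l j
          = ∑ l : Fin L, (normSq W ^ 2 * normSq V)⁻¹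
              * (∑ m : Fin L, Bmat a T ξ φ δ N L K i m * W m) * (W l * Ed ξ φ L K l j) :=
            Finset.sum_congr rfl fun l _ => by rw [hBP l]; ring
        _ = (normSq W ^ 2 * normSq V)⁻¹ * (∑ m : Fin L, Bmat a T ξ φ δ N L K i m * W m)
            * (∑ l : Fin L, W l * Ed ξ φ L K l j) := (Finset.mul_sum _ _ _).symm
    rw [hent]
    calc |(normSq W ^ 2 * normSq V)⁻¹ * (∑ m : Fin L, Bmat a T ξ φ δ N L K i m * W m)
          * (∑ l : Fin L, W l * Ed ξ φ L K l j)|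
        = (normSq W ^ 2 * normSq V)⁻¹ * |∑ m : Fin L, Bmat a T ξ φ δ N L K i m * W m|
            * |∑ l : Fin L, W l * Ed ξ φ L K l j| := by
          rw [abs_mul, abs_mul, abs_of_nonneg hcinv0]
      _ ≤ (β ^ 3 * (N:ℝ) ^ 3)⁻¹ * ((N:ℝ) * C1q a T ξ δ) * D := by
          exact mul_le_mul (mul_le_mul hcinv hG (abs_nonneg _) (by positivity))
            (hcolE j) (abs_nonneg _) (by positivity)
      _ = C1q a T ξ δ * D / β ^ 3 / (N:ℝ) ^ 2 := by
          field_simp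
      _ ≤ CC a T ξ δ β / (N:ℝ) ^ 2 := by
          exact div_le_div_of_nonneg_right hCC2 (by positivity)
  · -- third bound : P₀⊥ E
    apply ciSup_le
    rintro ⟨i, j⟩
    have hinv : (normSq W)⁻¹ ≤ (β * (N:ℝ))⁻¹ := inv_anti₀ hβN hnW_lo
    have hinv0 : 0 ≤ (normSq W)⁻¹ := inv_nonneg.2 hnW_pos.le
    have hent : (((normSq W)⁻¹ • Matrix.vecMulVec W W) * Ed ξ φ L K) i j
        = (normSq W)⁻¹ * W i * (∑ l : Fin L, W l * Ed ξ φ L K l j) := by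
      rw [Matrix.mul_apply]
      simp only [Matrix.smul_apply, Matrix.vecMulVec_apply, smul_eq_mul]
      calc ∑ l : Fin L, (normSq W)⁻¹ * (W i * W l) * Ed ξ φ L K l j
          = ∑ l : Fin L, (normSq W)⁻¹ * W i * (W l * Ed ξ φ L K l j) :=
            Finset.sum_congr rfl fun l _ => by ring
        _ = (normSq W)⁻¹ * W i * (∑ l : Fin L, W l * Ed ξ φ L K l j) :=
            (Finset.mul_sum _ _ _).symm
    rw [hent]
    calc |(normSq W)⁻¹ * W i * (∑ l : Fin L, W l * Ed ξ φ L K l j)|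
        = (normSq W)⁻¹ * |W i| * |∑ l : Fin L, W l * Ed ξ φ L K l j| := by
          rw [abs_mul, abs_mul, abs_of_nonneg hinv0]
      _ ≤ (β * (N:ℝ))⁻¹ * A * D := by
          have hWiA : |W i| ≤ A := by
            rw [abs_of_nonneg (by linarith [hW1 i])]; exact hWA i
          exact mul_le_mul (mul_le_mul hinv hWiA (abs_nonneg _) (by positivity))
            (hcolE j) (abs_nonneg _) (by positivity)
      _ = A * D / β / (N:ℝ) := by
          field_simp
      _ ≤ CC a T ξ δ β / (N:ℝ) := by
          exact div_le_div_of_nonneg_right hCC3 hn.le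

/-- in the discretization scheme, `‖S₀B(δ)‖_max = O(1/N²)`,
`‖B(δ)S₀E‖_max = O(1/N²)` and `‖P₀⊥E‖_max = O(1/N)`. -/
theorem stmt_17 (a T ξ φ α : ℝ) (ha : 1 < a) (hT : 0 < T)
    (hξ : ξ ∈ Set.Ioo 0 Real.pi) (hφ : φ ∈ Set.Ico 0 (2 * Real.pi))
    (hα : α ∈ Set.Ioo (0 : ℝ) 1)
    (L K : ℕ → ℕ)
    (hLK : ∀ N, 3 ≤ N → 1 < L N ∧ 1 < K N ∧ L N + K N = N + 1)
    (hlim : Tendsto (fun N : ℕ => (L N : ℝ) / (N : ℝ)) atTop (nhds α))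
    (δ : ℝ) :
    ∃ C > (0 : ℝ), ∃ N₀ : ℕ, ∀ N, N₀ ≤ N →
      maxNorm
          ((((normSq (Wd a T N (L N))) ^ 2 * normSq (Wd a T N (K N)))⁻¹ •
              Matrix.vecMulVec (Wd a T N (L N)) (Wd a T N (L N))) *
            Bmat a T ξ φ δ N (L N) (K N)) ≤ C / (N : ℝ) ^ 2 ∧
      maxNorm
          (Bmat a T ξ φ δ N (L N) (K N) *
            (((normSq (Wd a T N (L N))) ^ 2 * normSq (Wd a T N (K N)))⁻¹ •
              Matrix.vecMulVec (Wd a T N (L N)) (Wd a T N (L N))) *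
            Ed ξ φ (L N) (K N)) ≤ C / (N : ℝ) ^ 2 ∧
      maxNorm
          (((normSq (Wd a T N (L N)))⁻¹ •
              Matrix.vecMulVec (Wd a T N (L N)) (Wd a T N (L N))) *
            Ed ξ φ (L N) (K N)) ≤ C / (N : ℝ) := by
  obtain ⟨hα0, hα1⟩ := hα
  obtain ⟨hξ1, hξ2⟩ := hξ
  set β : ℝ := min α (1 - α) / 2 with hβdef
  have hβ : 0 < β := by
    rw [hβdef]
    have : 0 < min α (1 - α) := lt_min hα0 (by linarith)
    linarith
  refine ⟨CC a T ξ δ β, CC_pos a T ξ δ β ha hξ1 hξ2 hβ, ?_⟩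
  have h1 : ∀ᶠ N : ℕ in atTop, α / 2 ≤ (L N : ℝ) / N :=
    hlim.eventually (eventually_ge_nhds (by linarith))
  have h2 : ∀ᶠ N : ℕ in atTop, (L N : ℝ) / N ≤ (1 + α) / 2 :=
    hlim.eventually (eventually_le_nhds (by linarith))
  have h3 : ∀ᶠ N : ℕ in atTop, 3 ≤ N := eventually_ge_atTop 3
  obtain ⟨N₀, hN₀⟩ := Filter.eventually_atTop.mp ((h1.and h2).and h3)
  refine ⟨N₀, fun N hN => ?_⟩
  obtain ⟨⟨e1, e2⟩, e3⟩ := hN₀ N hN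
  obtain ⟨hL1, hK1, hLKsum⟩ := hLK N e3
  have hn : (0:ℝ) < N := by exact_mod_cast (by omega : 0 < N)
  have hLlow : α / 2 * N ≤ (L N : ℝ) := (le_div_iff₀ hn).mp e1
  have hLup : (L N : ℝ) ≤ (1 + α) / 2 * N := (div_le_iff₀ hn).mp e2
  have hKeq : (K N : ℝ) = (N : ℝ) + 1 - L N := by
    have hc : ((L N + K N : ℕ) : ℝ) = ((N + 1 : ℕ) : ℝ) := by rw [hLKsum]
    push_cast at hc
    linarith
  have hβα : β ≤ α / 2 := by
    rw [hβdef]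
    have := min_le_left α (1 - α)
    linarith
  have hβα' : β ≤ (1 - α) / 2 := by
    rw [hβdef]
    have := min_le_right α (1 - α)
    linarith
  have hLb : β * N ≤ (L N : ℝ) := by nlinarith
  have hKb : β * N ≤ (K N : ℝ) := by nlinarith
  exact core a T ξ φ δ β ha hT hξ1 hξ2 hβ N (L N) (K N) hL1 hK1 hLKsum hLb hKb
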